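/- arXiv:1206.4203 — 4 statements merged into one kernel-verified Lean document; each statement's English description precedes it below -/
import Mathlib

section
/- For every integer D ≥ 2 and all natural numbers p_1, …, p_D, the number of rooted line-colored D-ary trees having exactly p_i edges of color i for each i = 1, …, D equals (1/(p_1 + ⋯ + p_D + 1)) · ∏_{j=1}^{D} binom(p_1 + ⋯ + p_D + 1, p_j). In particular, the set of such trees is finite. -/
/-- A rooted line-colored `D`-ary tree, encoded by its (finite) set of vertices,
each vertex being identified with the sequence of edge colors on the path from
the root to it.  The set contains the root (empty word) and is closed under
taking prefixes.  This encoding automatically enforces that every vertex has at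
most `D` children and that the edges to the children of a vertex carry pairwise
distinct colors. -/
structure ColoredTree (D : ℕ) where
  verts : Finset (List (Fin D))
  root_mem : [] ∈ verts
  prefix_closed : ∀ w ∈ verts, ∀ v : List (Fin D), v <+: w → v ∈ verts

/-- The number of edges of color `i` in the tree: every non-root vertex is the lower
endpoint of exactly one edge, whose color is the last letter of the vertex's word. -/
def edgeCount {D : ℕ} (i : Fin D) (t : ColoredTree D) : ℕ :=
  (t.verts.filter fun w => w.getLast? = some i).card


def chi {ι : Type*} [DecidableEq ι] (A : Finset ι) (j : ι) : ℕ := if j ∈ A then 1 else 0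

lemma chi_of_mem {ι : Type*} [DecidableEq ι] {A : Finset ι} {j : ι} (h : j ∈ A) :
    chi A j = 1 := if_pos h

lemma chi_of_not_mem {ι : Type*} [DecidableEq ι] {A : Finset ι} {j : ι} (h : j ∉ A) :
    chi A j = 0 := if_neg h



namespace ColoredTree

variable {D : ℕ}

@[ext] lemma ext {s t : ColoredTree D} (h : s.verts = t.verts) : s = t := by
  cases s; cases t; simpa using h

instance : DecidableEq (ColoredTree D) := fun s t =>
  decidable_of_iff (s.verts = t.verts) ⟨fun h => ext h, fun h => h ▸ rfl⟩

/-- the one-vertex tree -/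
def triv (D : ℕ) : ColoredTree D :=
  ⟨{[]}, Finset.mem_singleton_self _, by
    intro w hw v hv
    simp only [Finset.mem_singleton] at hw ⊢
    subst hw
    exact List.prefix_nil.mp hv⟩

instance : Inhabited (ColoredTree D) := ⟨triv D⟩

/-- the set of colors of edges at the root -/
def rootChildren (t : ColoredTree D) : Finset (Fin D) :=
  Finset.univ.filter (fun i => [i] ∈ t.verts)

lemma mem_rootChildren {t : ColoredTree D} {i : Fin D} :
    i ∈ rootChildren t ↔ [i] ∈ t.verts := by simp [rootChildren]

/-- the subtree hanging below the root edge of color `i` -/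
def subtree (i : Fin D) (t : ColoredTree D) : ColoredTree D where
  verts := insert [] ((t.verts.filter fun w => w.head? = some i).image List.tail)
  root_mem := Finset.mem_insert_self _ _
  prefix_closed := by
    intro w hw v hv
    rcases Finset.mem_insert.mp hw with rfl | hw
    · rw [List.prefix_nil.mp hv]; exact Finset.mem_insert_self _ _
    · obtain ⟨u, hu, rfl⟩ := Finset.mem_image.mp hw
      rw [Finset.mem_filter] at hu
      obtain ⟨hu1, hu2⟩ := hu
      rcases v.eq_nil_or_concat with rfl | _
      · exact Finset.mem_insert_self _ _
      · have hune : u ≠ [] := by rintro rfl; simp at hu2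
        obtain ⟨a, u', rfl⟩ := List.exists_cons_of_ne_nil hune
        simp only [List.head?_cons, Option.some_inj] at hu2
        rw [hu2] at hu1
        have hv' : (i :: v) <+: (i :: u') := by
          simpa using hv
        have := t.prefix_closed _ hu1 (i :: v) hv'
        refine Finset.mem_insert_of_mem (Finset.mem_image.mpr ⟨i :: v, ?_, rfl⟩)
        rw [Finset.mem_filter]
        exact ⟨this, rfl⟩

lemma mem_subtree_verts {t : ColoredTree D} {i : Fin D} {w : List (Fin D)} :
    w ∈ (subtree i t).verts ↔ w = [] ∨ (i :: w) ∈ t.verts := by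
  constructor
  · intro hw
    rcases Finset.mem_insert.mp hw with rfl | hw
    · exact Or.inl rfl
    · obtain ⟨u, hu, rfl⟩ := Finset.mem_image.mp hw
      rw [Finset.mem_filter] at hu
      have hune : u ≠ [] := by rintro rfl; simp at hu
      obtain ⟨a, u', rfl⟩ := List.exists_cons_of_ne_nil hune
      simp only [List.head?_cons, Option.some_inj] at hu
      right
      simpa [← hu.2] using hu.1
  · rintro (rfl | hw)
    · exact Finset.mem_insert_self _ _
    · refine Finset.mem_insert_of_mem (Finset.mem_image.mpr ⟨i :: w, ?_, rfl⟩)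
      rw [Finset.mem_filter]
      exact ⟨hw, rfl⟩

/-- assembling a tree from a set of root colors and subtrees -/
def graft (A : Finset (Fin D)) (g : Fin D → ColoredTree D) : ColoredTree D where
  verts := insert [] (A.biUnion fun i => (g i).verts.image (List.cons i))
  root_mem := Finset.mem_insert_self _ _
  prefix_closed := by
    intro w hw v hv
    rcases Finset.mem_insert.mp hw with rfl | hw
    · rw [List.prefix_nil.mp hv]; exact Finset.mem_insert_self _ _
    · obtain ⟨i, hi, hw⟩ := Finset.mem_biUnion.mp hw
      obtain ⟨u, hu, rfl⟩ := Finset.mem_image.mp hw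
      rcases v with _ | ⟨a, v'⟩
      · exact Finset.mem_insert_self _ _
      · rw [List.cons_prefix_cons] at hv
        obtain ⟨ha, hv'⟩ := hv
        rw [ha]
        refine Finset.mem_insert_of_mem (Finset.mem_biUnion.mpr ⟨i, hi, ?_⟩)
        exact Finset.mem_image.mpr ⟨v', (g i).prefix_closed u hu v' hv', rfl⟩

lemma mem_graft_verts {A : Finset (Fin D)} {g : Fin D → ColoredTree D} {w : List (Fin D)} :
    w ∈ (graft A g).verts ↔ w = [] ∨ ∃ i ∈ A, ∃ u ∈ (g i).verts, w = i :: u := by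
  simp only [graft, Finset.mem_insert, Finset.mem_biUnion, Finset.mem_image]
  constructor
  · rintro (rfl | ⟨i, hi, u, hu, rfl⟩)
    · exact Or.inl rfl
    · exact Or.inr ⟨i, hi, u, hu, rfl⟩
  · rintro (rfl | ⟨i, hi, u, hu, rfl⟩)
    · exact Or.inl rfl
    · exact Or.inr ⟨i, hi, u, hu, rfl⟩

lemma rootChildren_graft (A : Finset (Fin D)) (g : Fin D → ColoredTree D) :
    rootChildren (graft A g) = A := by
  ext i
  rw [mem_rootChildren, mem_graft_verts]
  constructor
  · rintro (h | ⟨i', hi', u, hu, h⟩)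
    · exact absurd h (by simp)
    · obtain ⟨rfl, rfl⟩ : i = i' ∧ u = [] := by
        constructor
        · exact (List.cons.injEq _ _ _ _ ▸ h).1
        · exact ((List.cons.injEq _ _ _ _ ▸ h).2).symm
      exact hi'
  · intro hi
    exact Or.inr ⟨i, hi, [], (g i).root_mem, rfl⟩

lemma subtree_graft {A : Finset (Fin D)} (g : Fin D → ColoredTree D) {i : Fin D} (hi : i ∈ A) :
    subtree i (graft A g) = g i := by
  apply ext
  ext w
  rw [mem_subtree_verts, mem_graft_verts]
  constructor
  · rintro (rfl | h | ⟨i', hi', u, hu, h⟩)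
    · exact (g i).root_mem
    · exact absurd h (by simp)
    · obtain ⟨rfl, rfl⟩ : i = i' ∧ w = u := by
        constructor
        · exact (List.cons.injEq _ _ _ _ ▸ h).1
        · exact (List.cons.injEq _ _ _ _ ▸ h).2
      exact hu
  · intro hw
    exact Or.inr (Or.inr ⟨i, hi, w, hw, rfl⟩)

lemma graft_subtree (t : ColoredTree D) :
    graft (rootChildren t) (fun i => subtree i t) = t := by
  apply ext
  ext w
  rw [mem_graft_verts]
  constructor
  · rintro (rfl | ⟨i, hi, u, hu, rfl⟩)
    · exact t.root_mem
    · rcases mem_subtree_verts.mp hu with rfl | h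
      · exact mem_rootChildren.mp hi
      · exact h
  · intro hw
    rcases w with _ | ⟨a, u⟩
    · exact Or.inl rfl
    · right
      refine ⟨a, ?_, u, ?_, rfl⟩
      · exact mem_rootChildren.mpr (t.prefix_closed _ hw [a] ⟨u, rfl⟩)
      · exact mem_subtree_verts.mpr (Or.inr hw)

lemma getLast?_cons_iff {i j : Fin D} (u : List (Fin D)) :
    (i :: u).getLast? = some j ↔ (u.getLast? = some j ∨ (u = [] ∧ i = j)) := by
  cases u with
  | nil => simp [eq_comm]
  | cons a u' => simp [List.getLast?_cons_cons]

lemma edgeCount_graft (j : Fin D) (A : Finset (Fin D)) (g : Fin D → ColoredTree D) :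
    edgeCount j (graft A g) = (∑ i ∈ A, edgeCount j (g i)) + chi A j := by
  unfold edgeCount
  show ((insert [] (A.biUnion fun i => (g i).verts.image (List.cons i))).filter
      (fun w => w.getLast? = some j)).card = _
  rw [Finset.filter_insert]
  rw [if_neg (by simp)]
  rw [Finset.filter_biUnion]
  rw [Finset.card_biUnion]
  · have hterm : ∀ i ∈ A,
        (((g i).verts.image (List.cons i)).filter (fun w => w.getLast? = some j)).card
          = edgeCount j (g i) + (if i = j then 1 else 0) := by
      intro i _
      rw [Finset.filter_image]
      rw [Finset.card_image_of_injective _ (List.cons_injective)]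
      have : ((g i).verts.filter (fun u => (i :: u).getLast? = some j))
          = ((g i).verts.filter (fun u => u.getLast? = some j))
            ∪ ((g i).verts.filter (fun u => u = [] ∧ i = j)) := by
        rw [← Finset.filter_or]
        exact Finset.filter_congr (fun u _ => by rw [getLast?_cons_iff])
      rw [this, Finset.card_union_of_disjoint]
      · congr 1
        by_cases hij : i = j
        · subst hij
          have : ((g i).verts.filter (fun u => u = [] ∧ i = i)) = {([] : List (Fin D))} := by
            ext u
            simp only [Finset.mem_filter, Finset.mem_singleton, and_true]
            exact ⟨fun h => h.2, fun h => ⟨h ▸ (g i).root_mem, h⟩⟩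
          rw [this]
          simp
        · have : ((g i).verts.filter (fun u => u = [] ∧ i = j)) = ∅ := by
            apply Finset.filter_eq_empty_iff.mpr
            intro u _ h
            exact hij h.2
          rw [this]
          simp [hij]
      · rw [Finset.disjoint_left]
        rintro u hu hu'
        rw [Finset.mem_filter] at hu hu'
        rw [hu'.2.1] at hu
        simp at hu
    rw [Finset.sum_congr rfl hterm, Finset.sum_add_distrib]
    congr 1
    unfold chi
    by_cases hj : j ∈ A
    · rw [if_pos hj, Finset.sum_ite_eq' A j (fun _ => 1), if_pos hj]
    · rw [if_neg hj, Finset.sum_ite_eq' A j (fun _ => 1), if_neg hj]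
  · intro x hx y hy hxy
    apply Finset.disjoint_filter_filter
    rw [Finset.disjoint_left]
    rintro w hw hw'
    obtain ⟨u, -, rfl⟩ := Finset.mem_image.mp hw
    obtain ⟨u', -, h⟩ := Finset.mem_image.mp hw'
    exact hxy ((List.cons.injEq _ _ _ _ ▸ h).1.symm ▸ rfl)

lemma card_verts (t : ColoredTree D) :
    t.verts.card = (∑ j, edgeCount j t) + 1 := by
  have hmap : ∀ w ∈ t.verts, w.getLast? ∈ insert none (Finset.univ.image (some : Fin D → Option (Fin D))) := by
    intro w _
    cases h : w.getLast? with
    | none => exact Finset.mem_insert_self _ _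
    | some a => exact Finset.mem_insert_of_mem (Finset.mem_image.mpr ⟨a, Finset.mem_univ a, rfl⟩)
  rw [Finset.card_eq_sum_card_fiberwise hmap]
  rw [Finset.sum_insert (by simp)]
  have h1 : (t.verts.filter (fun w => w.getLast? = none)).card = 1 := by
    have : t.verts.filter (fun w => w.getLast? = none) = {([] : List (Fin D))} := by
      ext w
      simp only [Finset.mem_filter, Finset.mem_singleton, List.getLast?_eq_none_iff]
      exact ⟨fun h => h.2, fun h => ⟨h ▸ t.root_mem, h⟩⟩
    rw [this, Finset.card_singleton]
  rw [h1, Finset.sum_image (by intro x _ y _ h; exact Option.some_injective _ h)]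
  rw [add_comm]
  rfl

lemma edgeCount_pos {t : ColoredTree D} {i : Fin D} (h : [i] ∈ t.verts) :
    1 ≤ edgeCount i t := by
  apply Finset.card_pos.mpr
  exact ⟨[i], Finset.mem_filter.mpr ⟨h, rfl⟩⟩

lemma eq_triv {t : ColoredTree D} (h : ∀ i, edgeCount i t = 0) : t = triv D := by
  have hc : t.verts.card = 1 := by
    rw [card_verts t]
    simp [h]
  obtain ⟨x, hx⟩ := Finset.card_eq_one.mp hc
  have : x = [] := by
    have := t.root_mem
    rw [hx, Finset.mem_singleton] at this
    exact this.symm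
  apply ext
  rw [hx, this]
  rfl

lemma length_lt_card {t : ColoredTree D} {w : List (Fin D)} (hw : w ∈ t.verts) :
    w.length < t.verts.card := by
  have hsub : (Finset.range (w.length + 1)).image (fun k => w.take k) ⊆ t.verts := by
    intro v hv
    obtain ⟨k, -, rfl⟩ := Finset.mem_image.mp hv
    exact t.prefix_closed w hw _ (List.take_prefix k w)
  have hcard : ((Finset.range (w.length + 1)).image (fun k => w.take k)).card
      = w.length + 1 := by
    rw [Finset.card_image_of_injOn, Finset.card_range]
    intro a ha b hb hab
    rw [Finset.mem_coe, Finset.mem_range] at ha hb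
    have := congrArg List.length hab
    simp only [List.length_take] at this
    omega
  have := Finset.card_le_card hsub
  omega

lemma edgeCount_root_decomp (j : Fin D) (t : ColoredTree D) :
    edgeCount j t = (∑ i ∈ rootChildren t, edgeCount j (subtree i t))
      + chi (rootChildren t) j := by
  conv_lhs => rw [← graft_subtree t]
  rw [edgeCount_graft]

end ColoredTree

open ColoredTree

section Lists

lemma map_getD_indexOf {α β : Type*} [DecidableEq α] [Inhabited β] (s₀ : List α)
    (hnd : s₀.Nodup) (l : List β) (hlen : s₀.length ≤ l.length) :
    s₀.map (fun i => l.getD (s₀.idxOf i) default) = l.take s₀.length := by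
  apply List.ext_getElem
  · simp [hlen, List.length_take]
  · intro n h1 h2
    rw [List.getElem_map]
    have hn : n < s₀.length := by simpa using h1
    rw [hnd.idxOf_getElem n hn]
    rw [List.getD_eq_getElem _ _ (lt_of_lt_of_le hn hlen)]
    rw [List.getElem_take]

lemma sum_sort_map {α M : Type*} [AddCommMonoid M] [LinearOrder α] (A : Finset α) (f : α → M) :
    ((A.sort (· ≤ ·)).map f).sum = ∑ i ∈ A, f i := by
  rw [← Finset.sum_map_toList]
  exact List.Perm.sum_eq (List.Perm.map f (Finset.sort_perm_toList A _))

lemma sum_chi {ι : Type*} [Fintype ι] [DecidableEq ι] (A : Finset ι) :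
    ∑ i : ι, chi A i = A.card := by
  unfold chi
  rw [Finset.sum_ite_mem, Finset.univ_inter, Finset.sum_const, smul_eq_mul, mul_one]

end Lists

section Finiteness

variable {D : ℕ}

def listsLe (D : ℕ) : ℕ → Finset (List (Fin D))
  | 0 => {[]}
  | n+1 => insert [] (Finset.univ.biUnion fun i => (listsLe D n).image (List.cons i))

lemma mem_listsLe (D : ℕ) : ∀ (n : ℕ) (w : List (Fin D)), w.length ≤ n → w ∈ listsLe D n
  | 0, [], _ => by simp [listsLe]
  | n+1, [], _ => Finset.mem_insert_self _ _
  | 0, a :: u, h => absurd h (by simp)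
  | n+1, a :: u, h => by
    refine Finset.mem_insert_of_mem (Finset.mem_biUnion.mpr ⟨a, Finset.mem_univ a,
      Finset.mem_image.mpr ⟨u, mem_listsLe D n u (by simpa using h), rfl⟩⟩)

lemma trees_finite (D c : ℕ) : {t : ColoredTree D | ∑ j, edgeCount j t ≤ c}.Finite := by
  have hsub : {t : ColoredTree D | ∑ j, edgeCount j t ≤ c}
      ⊆ ColoredTree.verts ⁻¹' ↑((listsLe D c).powerset) := by
    intro t ht
    simp only [Set.mem_preimage, Finset.coe_powerset, Set.mem_preimage, Set.mem_setOf_eq,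
      Finset.mem_coe, Finset.mem_powerset]
    intro w hw
    apply mem_listsLe
    have h1 := length_lt_card hw
    have h2 := card_verts t
    simp only [Set.mem_setOf_eq] at ht
    omega
  refine (Set.Finite.preimage ?_ ((listsLe D c).powerset.finite_toSet)).subset hsub
  intro a _ b _ h
  exact ColoredTree.ext h

lemma lists_finite {α : Type*} {s : Set α} (hs : s.Finite) :
    ∀ k : ℕ, {l : List α | l.length = k ∧ ∀ x ∈ l, x ∈ s}.Finite
  | 0 => Set.Finite.subset (Set.finite_singleton []) (by
      rintro l ⟨hl, -⟩
      simp [List.length_eq_zero_iff.mp hl])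
  | k+1 => Set.Finite.subset (Set.Finite.image2 List.cons hs (lists_finite hs k)) (by
      rintro l ⟨hl, hmem⟩
      rcases l with _ | ⟨a, u⟩
      · simp at hl
      · exact Set.mem_image2_of_mem (hmem a (List.mem_cons_self))
          ⟨by simpa using hl, fun x hx => hmem x (List.mem_cons_of_mem a hx)⟩)

def forestSet (D k : ℕ) (p : Fin D → ℕ) : Set (List (ColoredTree D)) :=
  {l | l.length = k ∧ ∀ i, (l.map (edgeCount i)).sum = p i}

lemma le_sum_of_mem {l : List (ColoredTree D)} {t : ColoredTree D} (ht : t ∈ l) (i : Fin D) :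
    edgeCount i t ≤ (l.map (edgeCount i)).sum := by
  induction l with
  | nil => simp at ht
  | cons a u ih =>
    rcases List.mem_cons.mp ht with rfl | ht
    · simp
    · simp only [List.map_cons, List.sum_cons]
      exact le_add_of_nonneg_of_le (Nat.zero_le _) (ih ht)

lemma forest_finite (D k : ℕ) (p : Fin D → ℕ) : (forestSet D k p).Finite := by
  refine (lists_finite (trees_finite D (∑ i, p i)) k).subset ?_
  rintro l ⟨hl, hp⟩
  refine ⟨hl, fun t ht => ?_⟩
  simp only [Set.mem_setOf_eq]
  calc ∑ j, edgeCount j t ≤ ∑ j, (l.map (edgeCount j)).sum :=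
        Finset.sum_le_sum fun j _ => le_sum_of_mem ht j
    _ = ∑ j, p j := by rw [Finset.sum_congr rfl fun j _ => hp j]

lemma edgeCount_triv (i : Fin D) : edgeCount i (triv D) = 0 := by
  rw [edgeCount]
  rw [Finset.card_eq_zero, Finset.filter_eq_empty_iff]
  intro w hw
  rcases Finset.mem_singleton.mp hw with rfl
  simp

lemma forestSet_of_zero {k : ℕ} {p : Fin D → ℕ} (hp : ∀ i, p i = 0) :
    forestSet D k p = {List.replicate k (triv D)} := by
  ext l
  simp only [forestSet, Set.mem_setOf_eq, Set.mem_singleton_iff]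
  constructor
  · rintro ⟨hl, hsum⟩
    rw [List.eq_replicate_iff]
    refine ⟨hl, fun t ht => ?_⟩
    apply eq_triv
    intro i
    have := le_sum_of_mem ht i
    rw [hsum i, hp i] at this
    omega
  · rintro rfl
    refine ⟨List.length_replicate, fun i => ?_⟩
    rw [List.map_replicate]
    simp [edgeCount_triv, hp i]

end Finiteness

def validSets {ι : Type*} [DecidableEq ι] (q : ι → ℕ) (s : Finset ι) : Finset (Finset ι) :=
  s.powerset.filter (fun A => ∀ i ∈ A, 1 ≤ q i)

lemma mem_validSets {ι : Type*} [DecidableEq ι] {q : ι → ℕ} {s : Finset ι} {A : Finset ι} :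
    A ∈ validSets q s ↔ A ⊆ s ∧ ∀ i ∈ A, 1 ≤ q i := by
  simp [validSets]

namespace ColoredTree

lemma graft_congr {D : ℕ} {A : Finset (Fin D)} {g g' : Fin D → ColoredTree D}
    (h : ∀ i ∈ A, g i = g' i) : graft A g = graft A g' := by
  apply ext
  show insert _ _ = insert _ _
  congr 1
  exact Finset.biUnion_congr rfl fun i hi => by rw [h i hi]

end ColoredTree

section Recurrence

variable {D : ℕ}

noncomputable def fFinset (D k : ℕ) (p : Fin D → ℕ) : Finset (List (ColoredTree D)) :=
  (forest_finite D k p).toFinset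

lemma mem_fFinset {k : ℕ} {p : Fin D → ℕ} {l : List (ColoredTree D)} :
    l ∈ fFinset D k p ↔ l.length = k ∧ ∀ i, (l.map (edgeCount i)).sum = p i := by
  rw [fFinset, Set.Finite.mem_toFinset]
  rfl

lemma forest_card_rec (k : ℕ) (p : Fin D → ℕ) :
    (fFinset D (k+1) p).card
      = ∑ A ∈ validSets p Finset.univ,
          (fFinset D (k + A.card) (fun i => p i - chi A i)).card := by
  have hmap : ∀ l ∈ fFinset D (k+1) p, rootChildren l.headI ∈ validSets p Finset.univ := by
    intro l hl
    rw [mem_fFinset] at hl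
    obtain ⟨hlen, hprof⟩ := hl
    rcases l with _ | ⟨a, u⟩
    · simp at hlen
    · rw [mem_validSets]
      refine ⟨Finset.subset_univ _, fun i hi => ?_⟩
      have h1 : 1 ≤ edgeCount i a := edgeCount_pos (mem_rootChildren.mp hi)
      have h2 := hprof i
      simp only [List.map_cons, List.sum_cons] at h2
      omega
  rw [Finset.card_eq_sum_card_fiberwise hmap]
  apply Finset.sum_congr rfl
  intro A hA
  rw [mem_validSets] at hA
  obtain ⟨-, hAval⟩ := hA
  set s₀ := A.sort (· ≤ ·) with hs₀
  have hs₀len : s₀.length = A.card := Finset.length_sort _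
  have hs₀nd : s₀.Nodup := Finset.sort_nodup _ _
  have hs₀mem : ∀ i, i ∈ s₀ ↔ i ∈ A := fun i => Finset.mem_sort _
  apply Finset.card_nbij' (fun l => (s₀.map (fun i => subtree i l.headI)) ++ l.tail)
    (fun m => graft A (fun i => m.getD (s₀.idxOf i) default) :: m.drop A.card)
  -- forward maps into target
  · intro l hl
    rw [Finset.mem_coe, Finset.mem_filter, mem_fFinset] at hl
    obtain ⟨⟨hlen, hprof⟩, hroot⟩ := hl
    rcases l with _ | ⟨a, u⟩
    · simp at hlen
    · simp only [List.headI, List.tail_cons] at hroot ⊢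
      rw [Finset.mem_coe, mem_fFinset]
      constructor
      · rw [List.length_append, List.length_map, hs₀len]
        simp only [List.length_cons] at hlen
        omega
      · intro j
        rw [List.map_append, List.sum_append, List.map_map]
        have e1 : (s₀.map ((edgeCount j) ∘ (fun i => subtree i a))).sum
            = ∑ i ∈ A, edgeCount j (subtree i a) := sum_sort_map A _
        rw [e1]
        have e2 := edgeCount_root_decomp j a
        rw [hroot] at e2
        have e3 := hprof j
        simp only [List.map_cons, List.sum_cons] at e3
        omega
  -- backward maps into source
  · intro m hm
    rw [Finset.mem_coe, mem_fFinset] at hm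
    obtain ⟨hlen, hprof⟩ := hm
    rw [Finset.mem_coe, Finset.mem_filter, mem_fFinset]
    have hAle : s₀.length ≤ m.length := by omega
    have htake : s₀.map (fun i => m.getD (s₀.idxOf i) default) = m.take s₀.length :=
      map_getD_indexOf s₀ hs₀nd m hAle
    refine ⟨⟨?_, ?_⟩, ?_⟩
    · simp only [List.length_cons, List.length_drop]
      omega
    · intro j
      simp only [List.map_cons, List.sum_cons]
      rw [edgeCount_graft]
      have e1 : ∑ i ∈ A, edgeCount j ((fun i => m.getD (s₀.idxOf i) default) i)
          = ((m.take s₀.length).map (edgeCount j)).sum := by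
        rw [← sum_sort_map A _, ← htake, List.map_map]
        rfl
      rw [e1]
      have e2 : ((m.take s₀.length).map (edgeCount j)).sum
            + ((m.drop A.card).map (edgeCount j)).sum = p j - chi A j := by
        rw [hs₀len, ← List.sum_append, ← List.map_append, List.take_append_drop]
        exact hprof j
      have hchi : chi A j ≤ p j := by
        by_cases hj : j ∈ A
        · rw [chi_of_mem hj]; exact hAval j hj
        · rw [chi_of_not_mem hj]; exact Nat.zero_le _
      omega
    · simp only [List.headI]
      exact rootChildren_graft A _
  -- left inverse
  · intro l hl
    rw [Finset.mem_coe, Finset.mem_filter, mem_fFinset] at hl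
    obtain ⟨⟨hlen, hprof⟩, hroot⟩ := hl
    rcases l with _ | ⟨a, u⟩
    · simp at hlen
    · simp only [List.headI, List.tail_cons]
      have hmaplen : (s₀.map (fun i => subtree i a)).length = A.card := by
        rw [List.length_map, hs₀len]
      rw [List.drop_left' hmaplen]
      congr 1
      have hg : ∀ i ∈ A, (s₀.map (fun i => subtree i a) ++ u).getD (s₀.idxOf i) default
          = subtree i a := by
        intro i hi
        have hidx : s₀.idxOf i < s₀.length := List.idxOf_lt_length_iff.mpr ((hs₀mem i).mpr hi)
        have hidx' : s₀.idxOf i < (s₀.map (fun i => subtree i a) ++ u).length := by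
          rw [List.length_append, List.length_map]
          omega
        rw [List.getD_eq_getElem _ _ hidx']
        rw [List.getElem_append]
        rw [dif_pos (by rw [List.length_map]; exact hidx)]
        rw [List.getElem_map]
        rw [List.getElem_idxOf hidx]
      calc graft A (fun i => (s₀.map (fun i => subtree i a) ++ u).getD (s₀.idxOf i) default)
          = graft A (fun i => subtree i a) := ColoredTree.graft_congr hg
        _ = a := by rw [← hroot]; exact graft_subtree a
  -- right inverse
  · intro m hm
    rw [Finset.mem_coe, mem_fFinset] at hm
    obtain ⟨hlen, hprof⟩ := hm
    simp only [List.headI, List.tail_cons]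
    have hAle : s₀.length ≤ m.length := by omega
    have htake : s₀.map (fun i => m.getD (s₀.idxOf i) default) = m.take s₀.length :=
      map_getD_indexOf s₀ hs₀nd m hAle
    have hsub : s₀.map (fun i => subtree i (graft A (fun i => m.getD (s₀.idxOf i) default)))
        = s₀.map (fun i => m.getD (s₀.idxOf i) default) := by
      apply List.map_congr_left
      intro i hi
      exact subtree_graft _ ((hs₀mem i).mp hi)
    rw [hsub, htake, hs₀len]
    exact List.take_append_drop _ _

end Recurrence

open Finset in
lemma choose_pascal' {N q : ℕ} (hN : 1 ≤ N) :
    Nat.choose N q = (if 1 ≤ q then Nat.choose (N-1) (q-1) else 0) + Nat.choose (N-1) q := by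
  obtain ⟨m, rfl⟩ := Nat.exists_eq_add_of_le hN
  cases q with
  | zero => simp
  | succ t => simp [Nat.choose_succ_succ, Nat.add_comm 1 m]

open Finset in
lemma prod_choose_expand {ι : Type*} [DecidableEq ι] (s : Finset ι) (q : ι → ℕ) (N : ℕ)
    (hN : 1 ≤ N) :
    ∏ j ∈ s, Nat.choose N (q j)
      = ∑ A ∈ validSets q s, ∏ j ∈ s, Nat.choose (N-1) (q j - chi A j) := by
  rw [validSets]
  have h1 : ∏ j ∈ s, Nat.choose N (q j)
      = ∑ A ∈ s.powerset, (∏ i ∈ A, (if 1 ≤ q i then Nat.choose (N-1) (q i - 1) else 0))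
          * ∏ i ∈ s \ A, Nat.choose (N-1) (q i) := by
    rw [← Finset.prod_add]
    exact Finset.prod_congr rfl fun j _ => choose_pascal' hN
  rw [h1]
  rw [← Finset.sum_filter_add_sum_filter_not s.powerset (fun A => ∀ i ∈ A, 1 ≤ q i)]
  have h2 : ∑ A ∈ s.powerset.filter (fun A => ¬ ∀ i ∈ A, 1 ≤ q i),
      (∏ i ∈ A, (if 1 ≤ q i then Nat.choose (N-1) (q i - 1) else 0))
          * ∏ i ∈ s \ A, Nat.choose (N-1) (q i) = 0 := by
    apply Finset.sum_eq_zero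
    intro A hA
    simp only [mem_filter, not_forall] at hA
    obtain ⟨hA1, i, hi, hqi⟩ := hA
    have : (∏ i ∈ A, (if 1 ≤ q i then Nat.choose (N-1) (q i - 1) else 0)) = 0 :=
      Finset.prod_eq_zero hi (by simp [hqi])
    simp [this]
  rw [h2, add_zero]
  apply Finset.sum_congr rfl
  intro A hA
  simp only [mem_filter, mem_powerset] at hA
  obtain ⟨hAs, hAq⟩ := hA
  rw [← Finset.prod_sdiff hAs]
  rw [mul_comm]
  congr 1
  · exact Finset.prod_congr rfl fun j hj => by
      simp [chi_of_not_mem (mem_sdiff.mp hj).2]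
  · exact Finset.prod_congr rfl fun j hj => by
      simp [chi_of_mem hj, hj, hAq j hj]

open Finset in
lemma sum_choose_fiber {ι : Type*} [DecidableEq ι] (s : Finset ι) (q : ι → ℕ) (N : ℕ)
    (hN : 1 ≤ N) (i : ι) (hi : i ∈ s) (hqi : 1 ≤ q i) :
    ∑ A ∈ (validSets q s).filter (fun A => i ∈ A),
        ∏ j ∈ s, Nat.choose (N-1) (q j - chi A j)
      = Nat.choose (N-1) (q i - 1) * ∏ j ∈ s.erase i, Nat.choose N (q j) := by
  rw [prod_choose_expand (s.erase i) q N hN, Finset.mul_sum]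
  simp only [validSets]
  apply Finset.sum_nbij' (fun A => A.erase i) (fun B => insert i B)
  · intro A hA
    simp only [Finset.mem_filter, Finset.mem_powerset] at hA ⊢
    exact ⟨fun j hj => Finset.mem_erase.mpr ⟨(Finset.mem_erase.mp hj).1,
        hA.1.1 (Finset.mem_erase.mp hj).2⟩, fun j hj => hA.1.2 j (Finset.mem_erase.mp hj).2⟩
  · intro B hB
    simp only [Finset.mem_filter, Finset.mem_powerset] at hB ⊢
    refine ⟨⟨?_, ?_⟩, Finset.mem_insert_self i B⟩
    · intro j hj
      rcases Finset.mem_insert.mp hj with rfl | hj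
      · exact hi
      · exact Finset.mem_of_mem_erase (hB.1 hj)
    · intro j hj
      rcases Finset.mem_insert.mp hj with rfl | hj
      · exact hqi
      · exact hB.2 j hj
  · intro A hA
    simp only [Finset.mem_filter] at hA
    exact Finset.insert_erase hA.2
  · intro B hB
    simp only [Finset.mem_filter, Finset.mem_powerset] at hB
    exact Finset.erase_insert (fun hiB => (Finset.mem_erase.mp (hB.1 hiB)).1 rfl)
  · intro A hA
    simp only [Finset.mem_filter] at hA
    rw [← Finset.mul_prod_erase s _ hi]
    congr 1
    · simp [chi_of_mem hA.2]
    · apply Finset.prod_congr rfl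
      intro j hj
      have hji : j ≠ i := (Finset.mem_erase.mp hj).1
      congr 2
      simp [chi, Finset.mem_erase, hji]

set_option maxHeartbeats 1000000 in
open Finset in
lemma key_identity {ι : Type*} [Fintype ι] [DecidableEq ι] (q : ι → ℕ) (K N : ℕ)
    (hK : 1 ≤ K) (hn : 1 ≤ ∑ i, q i) (hN : N = (∑ i, q i) + K) :
    N * ∑ A ∈ validSets q Finset.univ,
        ((K - 1 + A.card) * ∏ j, Nat.choose (N-1) (q j - chi A j))
      = (N - 1) * (K * ∏ j, Nat.choose N (q j)) := by
  have hN1 : 1 ≤ N := by omega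
  set P := validSets q (Finset.univ : Finset ι) with hP
  set f : Finset ι → ℕ := fun A => ∏ j, Nat.choose (N-1) (q j - chi A j) with hf
  have hS1 : ∑ A ∈ P, f A = ∏ j, Nat.choose N (q j) :=
    (prod_choose_expand Finset.univ q N hN1).symm
  have hsplit : ∑ A ∈ P, ((K - 1 + A.card) * f A)
      = (K-1) * (∑ A ∈ P, f A) + ∑ i : ι, ∑ A ∈ P.filter (fun A => i ∈ A), f A := by
    have h1 : ∀ A : Finset ι, (K - 1 + A.card) * f A
        = (K-1) * f A + ∑ i : ι, (if i ∈ A then f A else 0) := by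
      intro A
      rw [add_mul]
      congr 1
      rw [Finset.sum_ite_mem, Finset.univ_inter, Finset.sum_const, smul_eq_mul]
    calc ∑ A ∈ P, ((K - 1 + A.card) * f A)
        = ∑ A ∈ P, ((K-1) * f A + ∑ i : ι, (if i ∈ A then f A else 0)) :=
          Finset.sum_congr rfl fun A _ => h1 A
      _ = (K-1) * (∑ A ∈ P, f A) + ∑ A ∈ P, ∑ i : ι, (if i ∈ A then f A else 0) := by
          rw [Finset.sum_add_distrib, Finset.mul_sum]
      _ = (K-1) * (∑ A ∈ P, f A) + ∑ i : ι, ∑ A ∈ P.filter (fun A => i ∈ A), f A := by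
          rw [Finset.sum_comm]
          congr 1
          exact Finset.sum_congr rfl fun i _ => (Finset.sum_filter _ _).symm
  have h2 : ∀ i : ι, N * ∑ A ∈ P.filter (fun A => i ∈ A), f A
      = q i * ∏ j, Nat.choose N (q j) := by
    intro i
    by_cases hqi : 1 ≤ q i
    · simp only [hP, hf]
      rw [sum_choose_fiber Finset.univ q N hN1 i (Finset.mem_univ i) hqi]
      rw [← mul_assoc]
      have hx : N * Nat.choose (N-1) (q i - 1) = q i * Nat.choose N (q i) := by
        have := Nat.add_one_mul_choose_eq (N-1) (q i - 1)
        rw [Nat.sub_add_cancel hN1, Nat.sub_add_cancel hqi] at this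
        rw [this, mul_comm]
      rw [hx, mul_assoc]
      congr 1
      exact Finset.mul_prod_erase Finset.univ (fun j => Nat.choose N (q j)) (Finset.mem_univ i)
    · have : P.filter (fun A => i ∈ A) = ∅ := by
        apply Finset.filter_eq_empty_iff.mpr
        intro A hA hiA
        exact hqi ((mem_validSets.mp hA).2 i hiA)
      rw [this]
      simp [Nat.eq_zero_of_not_pos hqi]
  have hB : ∑ i : ι, (N * ∑ A ∈ P.filter (fun A => i ∈ A), f A)
      = (∑ i, q i) * ∏ j, Nat.choose N (q j) := by
    rw [Finset.sum_congr rfl fun i _ => h2 i]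
    exact (Finset.sum_mul _ _ _).symm
  have hcoef : (K-1) * N + (∑ i, q i) = (N-1) * K := by
    cases K with
    | zero => omega
    | succ k =>
      subst hN
      have h4 : ∑ i, q i + (k+1) - 1 = ∑ i, q i + k := by omega
      simp only [Nat.add_sub_cancel, h4]
      ring
  rw [hsplit, Nat.mul_add]
  have e2 : N * ∑ i : ι, ∑ A ∈ P.filter (fun A => i ∈ A), f A
      = ∑ i : ι, (N * ∑ A ∈ P.filter (fun A => i ∈ A), f A) := Finset.mul_sum _ _ _
  rw [e2, hB, hS1]
  have e3 : N * ((K-1) * ∏ j, Nat.choose N (q j))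
      = ((K-1) * N) * ∏ j, Nat.choose N (q j) := by ring
  rw [e3, ← add_mul, hcoef, mul_assoc]


section Main

variable {D : ℕ}

lemma forest_count (D : ℕ) : ∀ (m k : ℕ) (p : Fin D → ℕ), (∑ i, p i) + k ≤ m →
    ((∑ i, p i) + k) * (fFinset D k p).card
      = k * ∏ j, Nat.choose ((∑ i, p i) + k) (p j) := by
  intro m
  induction m with
  | zero =>
    intro k p h
    have hk : k = 0 := by omega
    have hs : ∑ i, p i = 0 := by omega
    rw [hk, hs]
    simp
  | succ m ih =>
    intro k p hm
    cases k with
    | zero =>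
      by_cases hp : ∀ i, p i = 0
      · have : ∑ i, p i = 0 := Finset.sum_eq_zero (fun i _ => hp i)
        rw [this]
        simp
      · simp only [zero_mul, add_zero]
        have : fFinset D 0 p = ∅ := by
          rw [Finset.eq_empty_iff_forall_notMem]
          intro l hl
          rw [mem_fFinset] at hl
          obtain ⟨hlen, hprof⟩ := hl
          rw [List.length_eq_zero_iff] at hlen
          subst hlen
          push_neg at hp
          obtain ⟨i, hi⟩ := hp
          have h0 : p i = 0 := by simpa using (hprof i).symm
          exact hi h0
        rw [this]
        simp
    | succ k =>
      by_cases hn : ∑ i, p i = 0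
      · have hp : ∀ i, p i = 0 := by
          intro i
          have := Finset.sum_eq_zero_iff.mp hn
          exact this i (Finset.mem_univ i)
        have hcard : fFinset D (k+1) p = {List.replicate (k+1) (triv D)} := by
          ext l
          rw [mem_fFinset, Finset.mem_singleton]
          constructor
          · intro h
            have hh : l ∈ forestSet D (k+1) p := h
            rw [forestSet_of_zero hp] at hh
            exact hh
          · intro h
            have hh : l ∈ forestSet D (k+1) p := by
              rw [forestSet_of_zero hp]
              exact h
            exact hh
        rw [hcard, hn, Finset.card_singleton]
        simp [hp]
      · have hn1 : 1 ≤ ∑ i, p i := Nat.one_le_iff_ne_zero.mpr hn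
        have hIH : ∀ A ∈ validSets p Finset.univ,
            (∑ i, p i + k) * (fFinset D (k + A.card) (fun i => p i - chi A i)).card
              = (k + A.card) * ∏ j, Nat.choose (∑ i, p i + k) (p j - chi A j) := by
          intro A hA
          rw [mem_validSets] at hA
          have hpoint : ∀ i, (p i - chi A i) + chi A i = p i := fun i => by
            by_cases hi : i ∈ A
            · rw [chi_of_mem hi]
              have := hA.2 i hi
              omega
            · rw [chi_of_not_mem hi]
              omega
          have hsum' : (∑ i, (p i - chi A i)) + A.card = ∑ i, p i := by
            rw [← sum_chi A, ← Finset.sum_add_distrib]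
            exact Finset.sum_congr rfl fun i _ => hpoint i
          have hre : (∑ i, (p i - chi A i)) + (k + A.card) = ∑ i, p i + k := by omega
          have hble : (∑ i, ((fun i => p i - chi A i) i)) + (k + A.card) ≤ m := by
            simp only []
            omega
          have hh := ih (k + A.card) (fun i => p i - chi A i) hble
          rw [hre] at hh
          exact hh
        rw [forest_card_rec k p]
        apply Nat.eq_of_mul_eq_mul_left (show 0 < ∑ i, p i + k by omega)
        have hkey := key_identity p (k+1) (∑ i, p i + (k+1)) (by omega) hn1 rfl
        have e1 : ∑ i, p i + (k+1) - 1 = ∑ i, p i + k := by omega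
        have e2 : k + 1 - 1 = k := by omega
        rw [e1, e2] at hkey
        calc (∑ i, p i + k) * ((∑ i, p i + (k+1))
                * ∑ A ∈ validSets p Finset.univ,
                    (fFinset D (k + A.card) (fun i => p i - chi A i)).card)
            = (∑ i, p i + (k+1)) * ∑ A ∈ validSets p Finset.univ,
                ((∑ i, p i + k) * (fFinset D (k + A.card) (fun i => p i - chi A i)).card) := by
              rw [← Finset.mul_sum]
              ring
          _ = (∑ i, p i + (k+1)) * ∑ A ∈ validSets p Finset.univ,
                ((k + A.card) * ∏ j, Nat.choose (∑ i, p i + k) (p j - chi A j)) := by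
              congr 1
              exact Finset.sum_congr rfl hIH
          _ = (∑ i, p i + k) * ((k+1) * ∏ j, Nat.choose (∑ i, p i + (k+1)) (p j)) := hkey

end Main

theorem count_line_colored_trees (D : ℕ) (hD : 2 ≤ D) (p : Fin D → ℕ) :
    {t : ColoredTree D | ∀ i, edgeCount i t = p i}.Finite ∧
    (∑ i, p i + 1) * Nat.card {t : ColoredTree D // ∀ i, edgeCount i t = p i} =
      ∏ j, Nat.choose (∑ i, p i + 1) (p j) := by
  have hfin : {t : ColoredTree D | ∀ i, edgeCount i t = p i}.Finite := by
    refine (trees_finite D (∑ i, p i)).subset ?_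
    intro t ht
    simp only [Set.mem_setOf_eq] at ht ⊢
    exact le_of_eq (Finset.sum_congr rfl fun i _ => ht i)
  refine ⟨hfin, ?_⟩
  have hmem : ∀ t : {t : ColoredTree D // ∀ i, edgeCount i t = p i}, [t.1] ∈ fFinset D 1 p := by
    intro t
    rw [mem_fFinset]
    exact ⟨rfl, fun i => by simpa using t.2 i⟩
  have hcard : Nat.card {t : ColoredTree D // ∀ i, edgeCount i t = p i}
      = (fFinset D 1 p).card := by
    rw [← Nat.card_eq_finsetCard]
    apply Nat.card_eq_of_bijective (fun t => ⟨[t.1], hmem t⟩)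
    constructor
    · intro a b hab
      simp only [Subtype.mk.injEq, List.cons.injEq] at hab
      exact Subtype.ext hab.1
    · rintro ⟨l, hl⟩
      rw [mem_fFinset] at hl
      obtain ⟨hlen, hprof⟩ := hl
      obtain ⟨a, rfl⟩ := List.length_eq_one_iff.mp hlen
      refine ⟨⟨a, fun i => ?_⟩, rfl⟩
      simpa using hprof i
  rw [hcard]
  have h := forest_count D ((∑ i, p i) + 1) 1 p le_rfl
  simpa using h
end

section
/- For every integer D ≥ 2, every integer n ≥ 0, and all integers p_1, …, p_D ≥ 1, the rational numbers C^n satisfy the linear recursion C^{n+1}_{p_1,…,p_D} = C^{n}_{p_1,…,p_D} + ∑_{k=1}^{D} ∑_{1 ≤ i_1 < ⋯ < i_k ≤ D} C^{n+k}_{p_1, …, p_{i_1}−1, …, p_{i_k}−1, …, p_D}. -/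
open Finset


/-- The rational numbers `Cⁿ_{p₁…p_D}`: for `n ≥ 1` this is
`(n/(p₁+⋯+p_D+n)) · ∏_j binom(p₁+⋯+p_D+n, p_j)`; for `n = 0` it is `1` if all
`p_i = 0` and `0` otherwise. -/
def Ccoef (D n : ℕ) (p : Fin D → ℕ) : ℚ :=
  if n = 0 then (if ∀ i, p i = 0 then 1 else 0)
  else (n : ℚ) / ((∑ i, p i : ℕ) + n) * ∏ j, ((∑ i, p i + n).choose (p j) : ℚ)

theorem Ccoef_linear_recursion (D : ℕ) (hD : 2 ≤ D) (n : ℕ) (p : Fin D → ℕ)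
    (hp : ∀ i, 1 ≤ p i) :
    Ccoef D (n + 1) p =
      Ccoef D n p +
        ∑ k ∈ Finset.Icc 1 D,
          ∑ S ∈ Finset.powersetCard k (Finset.univ : Finset (Fin D)),
            Ccoef D (n + k) (fun i => p i - if i ∈ S then 1 else 0) := by
  classical
  set P := ∑ i, p i with hPdef
  have hDP : D ≤ P := by
    calc D = ∑ _i : Fin D, 1 := by simp
    _ ≤ P := Finset.sum_le_sum fun i _ => hp i
  set N := P + n with hNdef
  have hPN : P ≤ N := Nat.le_add_right _ _
  have hN2 : 2 ≤ N := le_trans hD (le_trans hDP hPN)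
  set b : ℕ → ℚ := fun q => (N.choose q : ℚ) with hbdef
  set F : Finset (Fin D) → ℚ := fun S => ∏ j, b (p j - if j ∈ S then 1 else 0) with hFdef
  have L2 : ∀ i : Fin D, ((N : ℚ) + 1 - p i) * b (p i - 1) = (p i) * b (p i) := by
    intro i
    have hpi : p i ≤ N := le_trans (Finset.single_le_sum (fun i _ => Nat.zero_le (p i)) (mem_univ i)) hPN
    have h1 : N.choose ((p i - 1) + 1) * ((p i - 1) + 1) = N.choose (p i - 1) * (N - (p i - 1)) :=
      Nat.choose_succ_right_eq N (p i - 1)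
    have hp1 : p i - 1 + 1 = p i := Nat.succ_pred_eq_of_pos (hp i)
    rw [hp1] at h1
    have hcast : ((N - (p i - 1) : ℕ) : ℚ) = (N : ℚ) + 1 - p i := by
      have : p i - 1 ≤ N := le_trans (Nat.sub_le _ _) hpi
      push_cast [Nat.cast_sub this, Nat.cast_sub (hp i)]
      ring
    have := congrArg (fun x : ℕ => (x : ℚ)) h1
    push_cast at this
    rw [hbdef, ← hcast]
    push_cast
    linarith [this]
  -- per-i vanishing identity
  have Ki : ∀ i : Fin D,
      ∑ S ∈ (univ : Finset (Fin D)).powerset,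
        ((if i ∈ S then (N : ℚ) + 1 else 0) - p i) * F S = 0 := by
    intro i
    have huniv : (univ : Finset (Fin D)) = insert i (univ.erase i) :=
      (insert_erase (mem_univ i)).symm
    rw [huniv, sum_powerset_insert (notMem_erase i univ), ← sum_add_distrib]
    apply Finset.sum_eq_zero
    intro T hT
    have hiT : i ∉ T := fun h => (notMem_erase i univ) ((mem_powerset.mp hT) h)
    set R : ℚ := ∏ j ∈ univ.erase i, b (p j - if j ∈ T then 1 else 0) with hRdef
    have hFT : F T = b (p i) * R := by
      simp only [hFdef]
      rw [← Finset.mul_prod_erase univ _ (mem_univ i)]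
      simp [hiT, hRdef]
    have hFiT : F (insert i T) = b (p i - 1) * R := by
      simp only [hFdef]
      rw [← Finset.mul_prod_erase univ _ (mem_univ i)]
      simp only [mem_insert, true_or, if_true]
      congr 1
      apply Finset.prod_congr rfl
      intro j hj
      have hji : j ≠ i := ne_of_mem_erase hj
      simp [hji]
    rw [if_neg hiT, if_pos (mem_insert_self i T), hFT, hFiT]
    linear_combination R * L2 i
  -- key summed identity
  have K : ∑ S ∈ (univ : Finset (Fin D)).powerset, ((S.card : ℚ) * ((N : ℚ) + 1) - P) * F S = 0 := by
    have step : ∀ S ∈ (univ : Finset (Fin D)).powerset,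
        ((S.card : ℚ) * ((N : ℚ) + 1) - P) * F S
          = ∑ i : Fin D, ((if i ∈ S then (N : ℚ) + 1 else 0) - p i) * F S := by
      intro S hS
      rw [← Finset.sum_mul]
      congr 1
      rw [Finset.sum_sub_distrib]
      congr 1
      · rw [Finset.sum_ite_mem, univ_inter, Finset.sum_const, nsmul_eq_mul]
      · rw [hPdef]; push_cast; rfl
    rw [Finset.sum_congr rfl step, Finset.sum_comm]
    exact Finset.sum_eq_zero fun i _ => Ki i
  -- rewrite each RHS term
  have hterm : ∀ S : Finset (Fin D),
      Ccoef D (n + S.card) (fun i => p i - if i ∈ S then 1 else 0)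
        = ((n : ℚ) + S.card) / N * F S := by
    intro S
    have hcardD : S.card ≤ D := by
      simpa using Finset.card_le_card (Finset.subset_univ S)
    have hcardP : S.card ≤ P := le_trans hcardD hDP
    have hsub : ∑ i, (p i - if i ∈ S then 1 else 0) = P - S.card := by
      rw [Finset.sum_tsub_distrib (s := univ) (f := p)
        (g := fun i => if i ∈ S then 1 else 0) (fun i _ => by have := hp i; split <;> omega)]
      congr 1
      rw [Finset.sum_ite_mem, univ_inter, Finset.sum_const, smul_eq_mul, mul_one]
    by_cases h0 : n + S.card = 0
    · have hn0 : n = 0 := by omega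
      have hS0 : S = ∅ := Finset.card_eq_zero.mp (by omega)
      have : ¬ ∀ i, (p i - if i ∈ S then 1 else 0) = 0 := by
        intro h
        have := h ⟨0, by omega⟩
        have := hp ⟨0, by omega⟩
        simp [hS0] at *
        omega
      rw [Ccoef, if_pos h0, if_neg this]
      rw [hn0, hS0]
      simp
    · rw [Ccoef, if_neg h0, hsub]
      have hNsum : P - S.card + (n + S.card) = N := by omega
      have hcast : ((P - S.card : ℕ) : ℚ) + ((n + S.card : ℕ) : ℚ) = (N : ℚ) := by
        rw [← Nat.cast_add, hNsum]
      rw [hNsum, hcast]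
      push_cast
      rfl
  -- restructure the RHS double sum
  have hRHS : Ccoef D n p +
        ∑ k ∈ Finset.Icc 1 D,
          ∑ S ∈ Finset.powersetCard k (Finset.univ : Finset (Fin D)),
            Ccoef D (n + k) (fun i => p i - if i ∈ S then 1 else 0)
      = ∑ S ∈ (univ : Finset (Fin D)).powerset, ((n : ℚ) + S.card) / N * F S := by
    have h1 : ∑ S ∈ (univ : Finset (Fin D)).powerset,
          Ccoef D (n + S.card) (fun i => p i - if i ∈ S then 1 else 0)
        = ∑ j ∈ range (D + 1), ∑ S ∈ Finset.powersetCard j (univ : Finset (Fin D)),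
          Ccoef D (n + S.card) (fun i => p i - if i ∈ S then 1 else 0) := by
      rw [Finset.sum_powerset]
      simp
    have hrange : range (D + 1) = insert 0 (Finset.Icc 1 D) := by
      ext k; simp [Finset.mem_range, Finset.mem_Icc]; omega
    rw [← Finset.sum_congr rfl (fun S _ => hterm S), h1, hrange,
      Finset.sum_insert (by simp)]
    congr 1
    · rw [Finset.powersetCard_zero, Finset.sum_singleton]
      simp
    · apply Finset.sum_congr rfl
      intro k hk
      apply Finset.sum_congr rfl
      intro S hS
      have : S.card = k := (Finset.mem_powersetCard.mp hS).2
      rw [this]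
  -- rewrite the LHS
  have hLHS : Ccoef D (n + 1) p
      = ((n : ℚ) + 1) / ((N : ℚ) + 1) * ∑ S ∈ (univ : Finset (Fin D)).powerset, F S := by
    rw [Ccoef, if_neg (Nat.succ_ne_zero n)]
    have hchoose : ∀ j : Fin D, ((P + (n + 1)).choose (p j) : ℚ) = b (p j - 1) + b (p j) := by
      intro j
      have hP1 : P + (n + 1) = N + 1 := by omega
      have hpj : p j = (p j - 1) + 1 := (Nat.succ_pred_eq_of_pos (hp j)).symm
      rw [hP1, hpj, Nat.choose_succ_succ]
      push_cast
      simp only [hbdef, Nat.succ_eq_add_one, ← hpj]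
    have hprod : ∏ j, ((P + (n + 1)).choose (p j) : ℚ)
        = ∑ S ∈ (univ : Finset (Fin D)).powerset, F S := by
      rw [Finset.prod_congr rfl (fun j _ => hchoose j), Finset.prod_add]
      apply Finset.sum_congr rfl
      intro S hS
      simp only [hFdef]
      have hU : (univ : Finset (Fin D)) = S ∪ (univ \ S) := by
        rw [Finset.union_sdiff_of_subset (Finset.subset_univ S)]
      rw [show (∏ j, b (p j - if j ∈ S then 1 else 0))
          = ∏ j ∈ S ∪ (univ \ S), b (p j - if j ∈ S then 1 else 0) by rw [← hU]]
      rw [Finset.prod_union (Finset.disjoint_sdiff)]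
      congr 1
      · exact Finset.prod_congr rfl fun j hj => by simp [hj]
      · exact Finset.prod_congr rfl fun j hj => by
          have : j ∉ S := (Finset.mem_sdiff.mp hj).2
          simp [this]
    rw [hprod]
    have : ((P : ℚ) + ((n : ℕ) + 1 : ℕ)) = (N : ℚ) + 1 := by push_cast; rw [hNdef]; push_cast; ring
    rw [show ((P : ℕ) : ℚ) + (((n : ℕ) + 1 : ℕ) : ℚ) = (N : ℚ) + 1 by push_cast [hNdef]; ring]
    push_cast
    ring_nf
  -- finish
  rw [hLHS, hRHS]
  have hNQ : (N : ℚ) ≠ 0 := Nat.cast_ne_zero.mpr (by omega)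
  have hN1Q : (N : ℚ) + 1 ≠ 0 := by positivity
  have hnP : (n : ℚ) + P = N := by rw [hNdef]; push_cast; ring
  refine mul_left_cancel₀ (mul_ne_zero hNQ hN1Q) ?_
  set Q := ∑ S ∈ (univ : Finset (Fin D)).powerset, F S with hQ
  calc (N : ℚ) * ((N : ℚ) + 1) * (((n : ℚ) + 1) / ((N : ℚ) + 1) * Q)
      = ((n : ℚ) * ((N : ℚ) + 1)) * Q + (P : ℚ) * Q := by
        field_simp
        linear_combination (-Q) * hnP
    _ = (∑ S ∈ (univ : Finset (Fin D)).powerset, (n : ℚ) * ((N : ℚ) + 1) * F S)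
          + ((∑ S ∈ (univ : Finset (Fin D)).powerset, ((S.card : ℚ) * ((N : ℚ) + 1) - P) * F S)
            + ∑ S ∈ (univ : Finset (Fin D)).powerset, (P : ℚ) * F S) := by
        rw [K, ← Finset.mul_sum, ← Finset.mul_sum, ← hQ]
        ring
    _ = ∑ S ∈ (univ : Finset (Fin D)).powerset,
          ((n : ℚ) * ((N : ℚ) + 1) * F S
            + (((S.card : ℚ) * ((N : ℚ) + 1) - P) * F S + (P : ℚ) * F S)) := by
        rw [Finset.sum_add_distrib, Finset.sum_add_distrib]
    _ = ∑ S ∈ (univ : Finset (Fin D)).powerset,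
          (N : ℚ) * ((N : ℚ) + 1) * (((n : ℚ) + (S.card : ℚ)) / N * F S) := by
        refine Finset.sum_congr rfl fun S _ => ?_
        field_simp
        ring
    _ = (N : ℚ) * ((N : ℚ) + 1)
          * ∑ S ∈ (univ : Finset (Fin D)).powerset, ((n : ℚ) + (S.card : ℚ)) / N * F S :=
        (Finset.mul_sum _ _ _).symm
end

section
/- For every integer D ≥ 2 and every integer P ≥ 1, the sum of C^1_{p_1…p_D} over all tuples (p_1, …, p_D) of natural numbers with p_1 + ⋯ + p_D = P − 1 equals (1/P) · binom(D(P−1)+D, P−1), which in turn equals the D-Catalan number (1/(DP+1)) · binom(DP+1, P). -/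
/-- The rational number `C¹_{p₁…p_D} = (1/(p₁+⋯+p_D+1)) · ∏_j binom(p₁+⋯+p_D+1, p_j)`. -/
def C1 (D : ℕ) (p : Fin D → ℕ) : ℚ :=
  (1 : ℚ) / ((∑ i, p i : ℕ) + 1) * ∏ j, ((∑ i, p i + 1).choose (p j) : ℚ)

lemma sum_antidiagonalTuple_succ {M : Type*} [AddCommMonoid M] (D k : ℕ)
    (f : (Fin (D + 1) → ℕ) → M) :
    ∑ p ∈ Finset.Nat.antidiagonalTuple (D + 1) k, f p =
      ∑ ij ∈ Finset.HasAntidiagonal.antidiagonal k,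
        ∑ q ∈ Finset.Nat.antidiagonalTuple D ij.2, f (Fin.cons ij.1 q) := by
  rw [Finset.sum_sigma']
  refine Finset.sum_nbij'
    (fun p => (⟨(p 0, ∑ i : Fin D, p i.succ), fun i => p i.succ⟩ :
      (_ : ℕ × ℕ) × (Fin D → ℕ)))
    (fun x => Fin.cons x.1.1 x.2) ?_ ?_ ?_ ?_ ?_
  · intro p hp
    rw [Finset.Nat.mem_antidiagonalTuple] at hp
    simp only [Finset.mem_sigma, Finset.HasAntidiagonal.mem_antidiagonal, Finset.Nat.mem_antidiagonalTuple]
    exact ⟨by rw [← hp, Fin.sum_univ_succ], trivial⟩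
  · intro x hx
    rw [Finset.mem_sigma, Finset.HasAntidiagonal.mem_antidiagonal, Finset.Nat.mem_antidiagonalTuple] at hx
    rw [Finset.Nat.mem_antidiagonalTuple, Fin.sum_cons, hx.2, hx.1]
  · intro p hp
    exact Fin.cons_self_tail p
  · intro x hx
    rw [Finset.mem_sigma, Finset.HasAntidiagonal.mem_antidiagonal, Finset.Nat.mem_antidiagonalTuple] at hx
    obtain ⟨⟨a, b⟩, q⟩ := x
    simp only [Fin.cons_zero, Fin.cons_succ] at *
    simp [hx.2]
  · intro p hp
    exact congrArg f (Fin.cons_self_tail p).symm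

lemma vandermonde_multi (n : ℕ) : ∀ D k : ℕ,
    ∑ p ∈ Finset.Nat.antidiagonalTuple D k, ∏ j, n.choose (p j) = (D * n).choose k := by
  intro D
  induction D with
  | zero =>
    intro k
    cases k with
    | zero => simp
    | succ k => simp
  | succ D ih =>
    intro k
    rw [sum_antidiagonalTuple_succ]
    have : (D + 1) * n = n + D * n := by ring
    rw [this, Nat.add_choose_eq]
    refine Finset.sum_congr rfl fun ij hij => ?_
    simp only [Fin.prod_univ_succ, Fin.cons_zero, Fin.cons_succ]
    rw [← Finset.mul_sum, ih ij.2]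

theorem sum_C1_eq_DCatalan (D : ℕ) (hD : 2 ≤ D) (P : ℕ) (hP : 1 ≤ P) :
    (∑ p ∈ Finset.Nat.antidiagonalTuple D (P - 1), C1 D p =
      (1 / P : ℚ) * ((D * (P - 1) + D).choose (P - 1) : ℚ)) ∧
    ((1 / P : ℚ) * ((D * (P - 1) + D).choose (P - 1) : ℚ) =
      (1 / (D * P + 1) : ℚ) * ((D * P + 1).choose P : ℚ)) := by
  obtain ⟨Q, rfl⟩ : ∃ Q, P = Q + 1 := ⟨P - 1, by omega⟩
  have hsub : Q + 1 - 1 = Q := rfl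
  have hDP : D * (Q + 1 - 1) + D = D * (Q + 1) := by rw [hsub]; ring
  constructor
  · rw [hDP]
    have hsum : ∑ p ∈ Finset.Nat.antidiagonalTuple D Q, C1 D p =
        (1 / (Q + 1) : ℚ) * ∑ p ∈ Finset.Nat.antidiagonalTuple D Q,
          ∏ j, ((Q + 1).choose (p j) : ℚ) := by
      rw [Finset.mul_sum]
      refine Finset.sum_congr rfl fun p hp => ?_
      rw [Finset.Nat.mem_antidiagonalTuple] at hp
      unfold C1
      rw [hp]
    rw [hsub, hsum]
    have := vandermonde_multi (Q + 1) D Q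
    have hcast : ∑ p ∈ Finset.Nat.antidiagonalTuple D Q,
        ∏ j, ((Q + 1).choose (p j) : ℚ) = ((D * (Q + 1)).choose Q : ℚ) := by
      rw [← this]
      push_cast
      rfl
    rw [hcast]
    push_cast
    ring
  · rw [hDP, hsub]
    have key := Nat.add_one_mul_choose_eq (D * (Q + 1)) Q
    -- (D*(Q+1)+1) * (D*(Q+1)).choose Q = (D*(Q+1)+1).choose (Q+1) * (Q+1)
    have keyQ : ((D * (Q + 1) + 1 : ℕ) : ℚ) * ((D * (Q + 1)).choose Q : ℚ) =
        ((D * (Q + 1) + 1).choose (Q + 1) : ℚ) * ((Q + 1 : ℕ) : ℚ) := by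
      exact_mod_cast congrArg (Nat.cast : ℕ → ℚ) key
    have h1 : ((Q : ℚ) + 1) ≠ 0 := by positivity
    have h2 : ((D : ℚ) * ((Q : ℚ) + 1) + 1) ≠ 0 := by positivity
    field_simp
    push_cast at keyQ ⊢
    linarith [keyQ]
end

section
/- For every integer D ≥ 2 and every real R > 1, there exists ε_R > 0 such that for all complex numbers g_1, …, g_D with |g_i| < ε_R for each i, the complex polynomial Q(X) = −X + ∑_{k=0}^{D} (∑_{1 ≤ i_1 < ⋯ < i_k ≤ D} g_{i_1} ⋯ g_{i_k}) X^k has exactly one root of norm strictly less than R, counted with multiplicity (i.e., in the multiset of roots of Q, exactly one element has norm < R), and all other roots have norm ≥ R. -/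
open Polynomial

/-- The polynomial `Q(X) = −X + ∑_{k=0}^{D} e_k(g₁,…,g_D) X^k` where `e_k` is the
`k`-th elementary symmetric polynomial (the `k = 0` term being `1`). -/
noncomputable def Q (D : ℕ) (g : Fin D → ℂ) : Polynomial ℂ :=
  -X + ∑ k ∈ Finset.range (D + 1),
    C (∑ S ∈ Finset.powersetCard k (Finset.univ : Finset (Fin D)), ∏ i ∈ S, g i) * X ^ k

lemma Q_eq_prod (D : ℕ) (g : Fin D → ℂ) :
    Q D g = (∏ i : Fin D, (C (g i) * X + 1)) - X := by
  have key : (∏ i : Fin D, (C (g i) * X + 1)) = ∑ k ∈ Finset.range (D + 1),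
      C (∑ S ∈ Finset.powersetCard k (Finset.univ : Finset (Fin D)), ∏ i ∈ S, g i) * X ^ k := by
    rw [Finset.prod_add, Finset.powerset_card_disjiUnion]
    erw [Finset.sum_disjiUnion]
    rw [
      Finset.card_univ, Fintype.card_fin]
    refine Finset.sum_congr rfl fun k _ => ?_
    rw [map_sum, Finset.sum_mul]
    refine Finset.sum_congr rfl fun S hS => ?_
    simp only [Finset.prod_const_one, mul_one, Finset.prod_mul_distrib, map_prod,
      Finset.prod_const, (Finset.mem_powersetCard.mp hS).2]
  unfold Q
  rw [key, neg_add_eq_sub]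

lemma norm_prod_sub_prod_le {ι : Type*} (s : Finset ι) (a b : ι → ℂ) (M : ℝ) (hM : 1 ≤ M)
    (ha : ∀ i ∈ s, ‖a i‖ ≤ M) (hb : ∀ i ∈ s, ‖b i‖ ≤ M) :
    ‖(∏ i ∈ s, a i) - ∏ i ∈ s, b i‖ ≤ M ^ s.card * ∑ i ∈ s, ‖a i - b i‖ := by
  classical
  have hM0 : (0:ℝ) ≤ M := le_trans zero_le_one hM
  induction s using Finset.induction_on with
  | empty => simp
  | @insert j s hj ih =>
    rw [Finset.prod_insert hj, Finset.prod_insert hj, Finset.sum_insert hj,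
      Finset.card_insert_of_notMem hj]
    have haj := ha j (Finset.mem_insert_self j s)
    have hbP : ‖∏ i ∈ s, b i‖ ≤ M ^ s.card := by
      rw [norm_prod]
      calc ∏ i ∈ s, ‖b i‖ ≤ ∏ _i ∈ s, M := by
            refine Finset.prod_le_prod (fun i _ => norm_nonneg _)
              (fun i hi => hb i (Finset.mem_insert_of_mem hi))
        _ = M ^ s.card := Finset.prod_const M
    have ih' := ih (fun i hi => ha i (Finset.mem_insert_of_mem hi))
      (fun i hi => hb i (Finset.mem_insert_of_mem hi))
    have key : a j * ∏ i ∈ s, a i - b j * ∏ i ∈ s, b i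
        = a j * ((∏ i ∈ s, a i) - ∏ i ∈ s, b i) + (a j - b j) * ∏ i ∈ s, b i := by ring
    rw [key]
    have hsum0 : (0:ℝ) ≤ ∑ i ∈ s, ‖a i - b i‖ :=
      Finset.sum_nonneg fun i _ => norm_nonneg _
    calc ‖a j * ((∏ i ∈ s, a i) - ∏ i ∈ s, b i) + (a j - b j) * ∏ i ∈ s, b i‖
        ≤ ‖a j‖ * ‖(∏ i ∈ s, a i) - ∏ i ∈ s, b i‖ + ‖a j - b j‖ * ‖∏ i ∈ s, b i‖ := by
          refine le_trans (norm_add_le _ _) ?_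
          rw [norm_mul, norm_mul]
      _ ≤ M * (M ^ s.card * ∑ i ∈ s, ‖a i - b i‖) + ‖a j - b j‖ * M ^ s.card := by
          gcongr
      _ ≤ M ^ (s.card + 1) * (‖a j - b j‖ + ∑ i ∈ s, ‖a i - b i‖) := by
          rw [pow_succ, mul_add]
          have h2 : M ^ s.card ≤ M ^ s.card * M := by
            nlinarith [pow_nonneg hM0 s.card]
          nlinarith [norm_nonneg (a j - b j), pow_nonneg hM0 s.card]

lemma derivative_finset_prod {ι : Type*} [DecidableEq ι] (s : Finset ι) (f : ι → Polynomial ℂ) :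
    Polynomial.derivative (∏ i ∈ s, f i)
      = ∑ i ∈ s, (∏ j ∈ s.erase i, f j) * Polynomial.derivative (f i) := by
  induction s using Finset.induction_on with
  | empty => simp
  | @insert j s hj ih =>
    rw [Finset.prod_insert hj, Polynomial.derivative_mul, ih, Finset.sum_insert hj,
      Finset.erase_insert hj, Finset.mul_sum]
    congr 1
    · rw [mul_comm]
    · refine Finset.sum_congr rfl fun i hi => ?_
      have hij : i ≠ j := fun h => hj (h ▸ hi)
      rw [Finset.erase_insert_of_ne hij.symm, Finset.prod_insert (fun h => hj (Finset.mem_of_mem_erase h)),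
        mul_assoc]

/-- For small enough `g`, exactly one root of `Q` (in the multiset of roots, i.e.
counted with multiplicity) has norm `< R`; equivalently all the other roots have
norm `≥ R`. -/
theorem Q_has_unique_small_root (D : ℕ) (hD : 2 ≤ D) (R : ℝ) (hR : 1 < R) :
    ∃ εR > 0, ∀ g : Fin D → ℂ, (∀ i, ‖g i‖ < εR) →
      ((Q D g).roots.filter fun z => ‖z‖ < R).card = 1 := by

  classical
  have hR0 : (0:ℝ) < R := lt_trans one_pos hR
  set P : ℝ := (D : ℝ) * 2 ^ D with hPdef
  have hD2 : (2:ℝ) ≤ (D:ℝ) := by exact_mod_cast hD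
  have h2D : (4:ℝ) ≤ 2 ^ D := by
    calc (4:ℝ) = 2 ^ 2 := by norm_num
      _ ≤ 2 ^ D := pow_le_pow_right₀ one_le_two hD
  have hP : (8:ℝ) ≤ P := by nlinarith
  have hP0 : (0:ℝ) < P := by linarith
  set ε : ℝ := min ((R - 1) / (P * R)) (1 / (P * (R + 2))) with hεdef
  have hεpos : 0 < ε := lt_min (div_pos (by linarith) (by positivity))
    (div_pos one_pos (by positivity))
  refine ⟨ε, hεpos, fun g hg => ?_⟩
  have hε1 : ε * (P * R) ≤ R - 1 := by
    rw [← le_div_iff₀ (by positivity)]; exact min_le_left _ _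
  have hε2 : ε * (P * (R + 2)) ≤ 1 := by
    rw [← le_div_iff₀ (by positivity)]; exact min_le_right _ _
  have hεR1 : ε * R ≤ 1 := by nlinarith [hεpos.le]
  have hεhalf : P * ε ≤ 1 / 2 := by nlinarith [hεpos.le]
  set F : ℂ → ℂ := fun z => ∏ i : Fin D, (g i * z + 1) with hFdef
  have huniv : (Finset.univ : Finset (Fin D)).card = D := by
    rw [Finset.card_univ, Fintype.card_fin]
  have hne : (Finset.univ : Finset (Fin D)).Nonempty :=
    ⟨⟨0, by omega⟩, Finset.mem_univ _⟩
  -- each factor is bounded by 2 on the ball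
  have hfac : ∀ z : ℂ, ‖z‖ ≤ R → ∀ i, ‖g i * z + 1‖ ≤ 2 := by
    intro z hz i
    calc ‖g i * z + 1‖ ≤ ‖g i * z‖ + ‖(1:ℂ)‖ := norm_add_le _ _
      _ = ‖g i‖ * ‖z‖ + 1 := by rw [norm_mul, norm_one]
      _ ≤ ε * R + 1 := by
          have := mul_le_mul (hg i).le hz (norm_nonneg z) hεpos.le
          linarith
      _ ≤ 2 := by linarith
  -- Lipschitz-type bound
  have hdiff : ∀ z w : ℂ, ‖z‖ ≤ R → ‖w‖ ≤ R → ‖F z - F w‖ ≤ P * ε * ‖z - w‖ := by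
    intro z w hz hw
    have h := norm_prod_sub_prod_le Finset.univ (fun i => g i * z + 1)
      (fun i => g i * w + 1) 2 one_le_two (fun i _ => hfac z hz i) (fun i _ => hfac w hw i)
    rw [huniv] at h
    refine h.trans ?_
    have hsum : ∑ i : Fin D, ‖(g i * z + 1) - (g i * w + 1)‖ ≤ (D : ℝ) * (ε * ‖z - w‖) := by
      have : ∀ i : Fin D, ‖(g i * z + 1) - (g i * w + 1)‖ ≤ ε * ‖z - w‖ := by
        intro i
        have : (g i * z + 1) - (g i * w + 1) = g i * (z - w) := by ring
        rw [this, norm_mul]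
        exact mul_le_mul_of_nonneg_right (hg i).le (norm_nonneg _)
      calc ∑ i : Fin D, ‖(g i * z + 1) - (g i * w + 1)‖ ≤ ∑ _i : Fin D, ε * ‖z - w‖ :=
            Finset.sum_le_sum fun i _ => this i
        _ = (D : ℝ) * (ε * ‖z - w‖) := by
            rw [Finset.sum_const, huniv, nsmul_eq_mul]
    calc (2:ℝ) ^ D * ∑ i : Fin D, ‖(g i * z + 1) - (g i * w + 1)‖
        ≤ 2 ^ D * ((D:ℝ) * (ε * ‖z - w‖)) := by
          exact mul_le_mul_of_nonneg_left hsum (by positivity)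
      _ = P * ε * ‖z - w‖ := by rw [hPdef]; ring
  -- F maps the closed ball strictly inside
  have hnear1 : ∀ z : ℂ, ‖z‖ ≤ R → ‖F z - 1‖ < R - 1 := by
    intro z hz
    have h := norm_prod_sub_prod_le Finset.univ (fun i => g i * z + 1)
      (fun _ => (1:ℂ)) 2 one_le_two (fun i _ => hfac z hz i) (fun i _ => by norm_num)
    rw [huniv, Finset.prod_const_one] at h
    have hsum : ∑ i : Fin D, ‖(g i * z + 1) - 1‖ < (D:ℝ) * (ε * R) := by
      have : ∀ i : Fin D, ‖(g i * z + 1) - 1‖ < ε * R := by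
        intro i
        have he : (g i * z + 1) - 1 = g i * z := by ring
        rw [he, norm_mul]
        calc ‖g i‖ * ‖z‖ ≤ ‖g i‖ * R := mul_le_mul_of_nonneg_left hz (norm_nonneg _)
          _ < ε * R := mul_lt_mul_of_pos_right (hg i) hR0
      calc ∑ i : Fin D, ‖(g i * z + 1) - 1‖ < ∑ _i : Fin D, ε * R :=
            Finset.sum_lt_sum_of_nonempty hne fun i _ => this i
        _ = (D:ℝ) * (ε * R) := by rw [Finset.sum_const, huniv, nsmul_eq_mul]
    have h2 : ‖F z - 1‖ < 2 ^ D * ((D:ℝ) * (ε * R)) :=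
      lt_of_le_of_lt h (by nlinarith [pow_pos (zero_lt_two (α := ℝ)) D])
    have : (2:ℝ) ^ D * ((D:ℝ) * (ε * R)) = ε * (P * R) := by rw [hPdef]; ring
    rw [this] at h2
    linarith
  have hmaps : ∀ z : ℂ, ‖z‖ ≤ R → ‖F z‖ < R := by
    intro z hz
    calc ‖F z‖ = ‖(F z - 1) + 1‖ := by ring_nf
      _ ≤ ‖F z - 1‖ + ‖(1:ℂ)‖ := norm_add_le _ _
      _ < (R - 1) + 1 := by
          have := hnear1 z hz
          rw [norm_one]; linarith
      _ = R := by ring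
  -- existence of fixed point via Banach
  set s : Set ℂ := Metric.closedBall (0:ℂ) R with hsdef
  have hmem : ∀ z : ℂ, z ∈ s ↔ ‖z‖ ≤ R := by
    intro z; rw [hsdef, Metric.mem_closedBall, dist_zero_right]
  have hsf : Set.MapsTo F s s := by
    intro z hz
    exact (hmem _).mpr (hmaps z ((hmem _).mp hz)).le
  have hcontr : ContractingWith (1/2 : NNReal) (hsf.restrict F s s) := by
    constructor
    · rw [← NNReal.coe_lt_coe]; norm_num
    · refine LipschitzWith.of_dist_le_mul fun x y => ?_
      rw [Subtype.dist_eq, Subtype.dist_eq, dist_eq_norm, dist_eq_norm]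
      have hx := (hmem _).mp x.2
      have hy := (hmem _).mp y.2
      have := hdiff x.1 y.1 hx hy
      have hc : ((1/2 : NNReal) : ℝ) = 1/2 := by norm_num
      rw [hc]
      calc ‖F x.1 - F y.1‖ ≤ P * ε * ‖x.1 - y.1‖ := this
        _ ≤ 1/2 * ‖x.1 - y.1‖ := mul_le_mul_of_nonneg_right hεhalf (norm_nonneg _)
  have h0s : (0:ℂ) ∈ s := (hmem _).mpr (by simp; linarith)
  obtain ⟨z₀, hz₀s, hfix, -, -⟩ := hcontr.exists_fixedPoint'
    (Metric.isClosed_closedBall.isComplete) hsf h0s (edist_ne_top _ _)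
  have hz₀R : ‖z₀‖ < R := by
    have h := hmaps z₀ ((hmem _).mp hz₀s)
    rwa [hfix] at h
  -- uniqueness
  have huniq : ∀ z : ℂ, ‖z‖ ≤ R → F z = z → z = z₀ := by
    intro z hz hzfix
    have h := hdiff z z₀ hz hz₀R.le
    rw [hzfix, hfix] at h
    have h2 : ‖z - z₀‖ ≤ 1/2 * ‖z - z₀‖ :=
      h.trans (mul_le_mul_of_nonneg_right hεhalf (norm_nonneg _))
    have : ‖z - z₀‖ = 0 := le_antisymm (by linarith) (norm_nonneg _)
    have := norm_sub_eq_zero_iff.mp this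
    exact this
  -- evaluation of Q
  have hQeval : ∀ z : ℂ, (Q D g).eval z = F z - z := by
    intro z
    rw [Q_eq_prod]
    simp [hFdef, eval_prod]
  have hQ0 : Q D g ≠ 0 := by
    intro h
    have h0 := hQeval 0
    rw [h] at h0
    simp [hFdef] at h0
  have hz₀root : (Q D g).IsRoot z₀ := by
    rw [IsRoot, hQeval, hfix, sub_self]
  -- derivative nonzero at z₀
  have hder : (Q D g).derivative.eval z₀ =
      (∑ i : Fin D, (∏ j ∈ Finset.univ.erase i, (g j * z₀ + 1)) * g i) - 1 := by
    rw [Q_eq_prod, derivative_sub, derivative_X, derivative_finset_prod]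
    simp [eval_finset_sum, eval_prod]
  have hderne : (Q D g).derivative.eval z₀ ≠ 0 := by
    rw [hder]
    intro hcontra
    have hT : (∑ i : Fin D, (∏ j ∈ Finset.univ.erase i, (g j * z₀ + 1)) * g i) = 1 :=
      sub_eq_zero.mp hcontra
    have hbound : ‖∑ i : Fin D, (∏ j ∈ Finset.univ.erase i, (g j * z₀ + 1)) * g i‖ < 1 := by
      have hterm : ∀ i : Fin D, ‖(∏ j ∈ Finset.univ.erase i, (g j * z₀ + 1)) * g i‖
          < 2 ^ D * ε := by
        intro i
        rw [norm_mul]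
        have hprod : ‖∏ j ∈ Finset.univ.erase i, (g j * z₀ + 1)‖ ≤ 2 ^ D := by
          rw [norm_prod]
          calc ∏ j ∈ Finset.univ.erase i, ‖g j * z₀ + 1‖
              ≤ ∏ _j ∈ Finset.univ.erase i, (2:ℝ) :=
                Finset.prod_le_prod (fun j _ => norm_nonneg _)
                  (fun j _ => hfac z₀ hz₀R.le j)
            _ = 2 ^ (Finset.univ.erase i).card := Finset.prod_const 2
            _ ≤ 2 ^ D := by
                apply pow_le_pow_right₀ one_le_two
                calc (Finset.univ.erase i).card ≤ Finset.univ.card :=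
                      Finset.card_le_card (Finset.erase_subset _ _)
                  _ = D := huniv
        calc ‖∏ j ∈ Finset.univ.erase i, (g j * z₀ + 1)‖ * ‖g i‖
            ≤ 2 ^ D * ‖g i‖ := mul_le_mul_of_nonneg_right hprod (norm_nonneg _)
          _ < 2 ^ D * ε := by
              exact mul_lt_mul_of_pos_left (hg i) (by positivity)
      calc ‖∑ i : Fin D, (∏ j ∈ Finset.univ.erase i, (g j * z₀ + 1)) * g i‖
          ≤ ∑ i : Fin D, ‖(∏ j ∈ Finset.univ.erase i, (g j * z₀ + 1)) * g i‖ :=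
            norm_sum_le _ _
        _ < ∑ _i : Fin D, 2 ^ D * ε :=
            Finset.sum_lt_sum_of_nonempty hne fun i _ => hterm i
        _ = (D:ℝ) * (2 ^ D * ε) := by rw [Finset.sum_const, huniv, nsmul_eq_mul]
        _ = P * ε := by rw [hPdef]; ring
        _ ≤ 1/2 := hεhalf
        _ < 1 := by norm_num
    rw [hT, norm_one] at hbound
    linarith
  -- root multiplicity is 1
  have hmult : (Q D g).rootMultiplicity z₀ = 1 := by
    have hpos : 0 < (Q D g).rootMultiplicity z₀ :=
      (rootMultiplicity_pos hQ0).mpr hz₀root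
    have hle : (Q D g).rootMultiplicity z₀ ≤ 1 := by
      by_contra hcon
      push_neg at hcon
      have := isRoot_iterate_derivative_of_lt_rootMultiplicity (n := 1) hcon
      rw [Function.iterate_one] at this
      exact hderne this
    omega
  -- conclude
  have hfilter : ((Q D g).roots.filter fun z => ‖z‖ < R)
      = (Q D g).roots.filter (· = z₀) := by
    refine Multiset.filter_congr fun z hz => ?_
    constructor
    · intro hzR
      have hzroot : (Q D g).eval z = 0 := (mem_roots hQ0).mp hz
      have : F z = z := by
        have := hQeval z
        rw [hzroot] at this
        exact (sub_eq_zero.mp this.symm)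
      exact huniq z hzR.le this
    · intro h; rw [h]; exact hz₀R
  rw [hfilter, Multiset.filter_eq', Multiset.card_replicate, count_roots, hmult]
end
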